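/- Let θ ∈ (1/2, 1), c > 0, ν₀ ∈ ℕ, and let (S_ν)_{ν∈ℕ} be a sequence of nonnegative reals satisfying (S_{ν+1})^{θ/(1−θ)} ≤ c·(S_ν − S_{ν+1}) for all ν ≥ ν₀. Then there exists c' > 0 such that S_ν ≤ c'·ν^{−(1−θ)/(2θ−1)} for all integers ν ≥ max(ν₀, 1). -/

import Mathlib

open Real

/-- Bernoulli's inequality for nonpositive real exponents. -/
lemma bernoulli_nonpos_aux {x p : ℝ} (hx : 0 < x) (hp : p ≤ 0) :
    1 + p * (x - 1) ≤ x ^ p := by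
  rw [Real.rpow_def_of_pos hx, mul_comm (Real.log x) p]
  have hlog : Real.log x ≤ x - 1 := Real.log_le_sub_one_of_pos hx
  have h1 : p * (x - 1) ≤ p * Real.log x := mul_le_mul_of_nonpos_left hlog hp
  have h2 : p * Real.log x + 1 ≤ Real.exp (p * Real.log x) := Real.add_one_le_exp _
  linarith

/-- Sublinear-rate lemma: if `θ ∈ (1/2,1)`, `c > 0`, and a nonnegative sequence `S`
satisfies `(S (ν+1))^{θ/(1−θ)} ≤ c (S ν − S (ν+1))` for all `ν ≥ ν₀`, then there is
`c' > 0` with `S ν ≤ c' ν^{−(1−θ)/(2θ−1)}` for all `ν ≥ max ν₀ 1`. -/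
theorem stmt8 (θ c : ℝ) (hθ0 : 1 / 2 < θ) (hθ1 : θ < 1) (hc : 0 < c) (ν₀ : ℕ)
    (S : ℕ → ℝ) (hS : ∀ ν, 0 ≤ S ν)
    (hrec : ∀ ν ≥ ν₀, (S (ν + 1)) ^ (θ / (1 - θ)) ≤ c * (S ν - S (ν + 1))) :
    ∃ c' > 0, ∀ ν ≥ max ν₀ 1, S ν ≤ c' * (ν : ℝ) ^ (-(1 - θ) / (2 * θ - 1)) := by
  have h1θ : 0 < 1 - θ := by linarith
  have h2θ : 0 < 2 * θ - 1 := by linarith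
  set α : ℝ := θ / (1 - θ) with hαdef
  have hα1 : 1 < α := (one_lt_div h1θ).2 (by linarith)
  set p : ℝ := 1 - α with hpdef
  have hp0 : p < 0 := by simp only [hpdef]; linarith
  set q : ℝ := -(1 - θ) / (2 * θ - 1) with hqdef
  have hq0 : q < 0 := div_neg_of_neg_of_pos (by linarith) h2θ
  have hpq : p * q = 1 := by
    rw [hpdef, hqdef, hαdef]
    field_simp
    have hne : (θ * 2 - 1) ≠ 0 := by intro h; linarith
    rw [neg_div', div_eq_one_iff_eq hne]
    ring
  -- monotonicity
  have hmono : ∀ ν, ν₀ ≤ ν → S (ν + 1) ≤ S ν := by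
    intro ν hν
    have h1 := hrec ν hν
    have h2 : (0:ℝ) ≤ S (ν + 1) ^ (θ / (1 - θ)) := Real.rpow_nonneg (hS _) _
    nlinarith
  have hmono' : ∀ ν, ν₀ ≤ ν → S ν ≤ S ν₀ := by
    intro ν hν
    induction ν, hν using Nat.le_induction with
    | base => exact le_refl _
    | succ n hn ih => exact le_trans (hmono n hn) ih
  by_cases hz : S ν₀ = 0
  · refine ⟨1, one_pos, ?_⟩
    intro ν hν
    have hν0 : ν₀ ≤ ν := le_trans (le_max_left _ _) hν
    have h1 : S ν ≤ 0 := hz ▸ hmono' ν hν0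
    have h2 := hS ν
    have h3 : (0:ℝ) ≤ (ν:ℝ) ^ q := Real.rpow_nonneg (Nat.cast_nonneg ν) q
    linarith
  have hS0 : 0 < S ν₀ := (hS ν₀).lt_of_ne (Ne.symm hz)
  have h2α : (1:ℝ) < (2:ℝ) ^ (α - 1) := by
    have h := Real.rpow_lt_rpow_of_exponent_lt (one_lt_two)
      (show (0:ℝ) < α - 1 by linarith)
    rwa [Real.rpow_zero] at h
  set μ : ℝ := min ((α - 1) * (2:ℝ) ^ (-α) / c) (((2:ℝ) ^ (α - 1) - 1) * S ν₀ ^ p) with hμdef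
  have hμ0 : 0 < μ := by
    apply lt_min
    · exact div_pos (mul_pos (by linarith) (Real.rpow_pos_of_pos two_pos _)) hc
    · exact mul_pos (by linarith) (Real.rpow_pos_of_pos hS0 _)
  -- key one-step estimate
  have hkey : ∀ ν, ν₀ ≤ ν → 0 < S (ν + 1) → S ν ^ p + μ ≤ S (ν + 1) ^ p := by
    intro ν hν ha
    set a := S (ν + 1) with hadef
    set b := S ν with hbdef
    have hab : a ≤ b := hmono ν hν
    have hb : 0 < b := lt_of_lt_of_le ha hab
    have hbS0 : b ≤ S ν₀ := hmono' ν hν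
    have hrec' : a ^ α ≤ c * (b - a) := hrec ν hν
    set r : ℝ := a / b with hrdef
    have hr0 : 0 < r := div_pos ha hb
    have hr1 : r ≤ 1 := (div_le_one hb).2 hab
    have har : a = b * r := by rw [hrdef]; field_simp
    have hap : a ^ p = b ^ p * r ^ p := by rw [har, Real.mul_rpow hb.le hr0.le]
    have hbp : 0 < b ^ p := Real.rpow_pos_of_pos hb _
    by_cases hcase : 1 / 2 ≤ r
    · -- r ≥ 1/2
      have hbern : 1 + p * (r - 1) ≤ r ^ p := bernoulli_nonpos_aux hr0 hp0.le
      have h1 : b ^ p * (p * (r - 1)) ≤ a ^ p - b ^ p := by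
        rw [hap]; nlinarith
      have hbpow : b ^ p = b * b ^ (-α) := by
        rw [hpdef, show (1:ℝ) - α = 1 + (-α) by ring, Real.rpow_add hb, Real.rpow_one]
      have h2 : b ^ p * (1 - r) = b ^ (-α) * (b - a) := by
        rw [hbpow, har]; ring
      have h4 : a ^ α * b ^ (-α) = r ^ α := by
        rw [har, Real.mul_rpow hb.le hr0.le, Real.rpow_neg hb.le]
        have hbα : (0:ℝ) < b ^ α := Real.rpow_pos_of_pos hb _
        field_simp
      have h5 : (2:ℝ) ^ (-α) ≤ r ^ α := by
        have h : ((2:ℝ)⁻¹) ^ α ≤ r ^ α :=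
          Real.rpow_le_rpow (by norm_num) (by linarith) (by linarith)
        rwa [Real.inv_rpow (by norm_num), ← Real.rpow_neg (by norm_num)] at h
      have hμ1 : μ ≤ (α - 1) * (2:ℝ) ^ (-α) / c := min_le_left _ _
      have hbα : 0 < b ^ (-α) := Real.rpow_pos_of_pos hb _
      calc b ^ p + μ ≤ b ^ p + (α - 1) * (2:ℝ) ^ (-α) / c := by linarith
        _ ≤ b ^ p + (α - 1) * r ^ α / c := by
            have h6 : (α - 1) * (2:ℝ) ^ (-α) ≤ (α - 1) * r ^ α :=
              mul_le_mul_of_nonneg_left h5 (by linarith)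
            have h7 : (α - 1) * (2:ℝ) ^ (-α) / c ≤ (α - 1) * r ^ α / c :=
              div_le_div_of_nonneg_right h6 hc.le
            linarith
        _ = b ^ p + (α - 1) * (a ^ α * b ^ (-α)) / c := by rw [h4]
        _ ≤ b ^ p + (α - 1) * ((c * (b - a)) * b ^ (-α)) / c := by
            have h6 : a ^ α * b ^ (-α) ≤ (c * (b - a)) * b ^ (-α) :=
              mul_le_mul_of_nonneg_right hrec' hbα.le
            have h7 : (α - 1) * (a ^ α * b ^ (-α)) ≤ (α - 1) * ((c * (b - a)) * b ^ (-α)) :=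
              mul_le_mul_of_nonneg_left h6 (by linarith)
            have h8 := div_le_div_of_nonneg_right h7 hc.le
            linarith
        _ = b ^ p + (α - 1) * (b ^ (-α) * (b - a)) := by field_simp
        _ = b ^ p + (α - 1) * (b ^ p * (1 - r)) := by rw [h2]
        _ = b ^ p + b ^ p * (p * (r - 1)) := by rw [hpdef]; ring
        _ ≤ a ^ p := by linarith
    · -- r < 1/2
      push_neg at hcase
      have hr2 : (2:ℝ) ^ (α - 1) ≤ r ^ p := by
        have h := Real.rpow_le_rpow_of_nonpos hr0 (le_of_lt hcase) hp0.le
        rwa [show (1/2:ℝ) = 2⁻¹ by norm_num, Real.inv_rpow (by norm_num),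
          ← Real.rpow_neg (by norm_num), show -p = α - 1 by rw [hpdef]; ring] at h
      have hbS : S ν₀ ^ p ≤ b ^ p := Real.rpow_le_rpow_of_nonpos hb hbS0 hp0.le
      have hμ2 : μ ≤ ((2:ℝ) ^ (α - 1) - 1) * S ν₀ ^ p := min_le_right _ _
      calc b ^ p + μ ≤ b ^ p + ((2:ℝ) ^ (α - 1) - 1) * S ν₀ ^ p := by linarith
        _ ≤ b ^ p + ((2:ℝ) ^ (α - 1) - 1) * b ^ p := by
            have h6 : ((2:ℝ) ^ (α - 1) - 1) * S ν₀ ^ p ≤ ((2:ℝ) ^ (α - 1) - 1) * b ^ p :=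
              mul_le_mul_of_nonneg_left hbS (by linarith)
            linarith
        _ = b ^ p * (2:ℝ) ^ (α - 1) := by ring
        _ ≤ b ^ p * r ^ p := mul_le_mul_of_nonneg_left hr2 hbp.le
        _ = a ^ p := hap.symm
  -- linear growth of S^p
  have hind : ∀ k : ℕ, 0 < S (ν₀ + k) → S ν₀ ^ p + k * μ ≤ S (ν₀ + k) ^ p := by
    intro k
    induction k with
    | zero => intro _; simp
    | succ n ih =>
      intro h
      have hn : ν₀ ≤ ν₀ + n := Nat.le_add_right _ _
      have hsucc : S (ν₀ + (n + 1)) = S (ν₀ + n + 1) := by rw [Nat.add_succ]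
      have hpos : 0 < S (ν₀ + n) :=
        lt_of_lt_of_le (hsucc ▸ h) (hmono (ν₀ + n) hn)
      have h1 := ih hpos
      have h2 := hkey (ν₀ + n) hn (hsucc ▸ h)
      rw [hsucc]
      push_cast
      linarith
  -- decay bound
  have hbound : ∀ k : ℕ, 1 ≤ k → S (ν₀ + k) ≤ μ ^ q * (k:ℝ) ^ q := by
    intro k hk
    have hk0 : (0:ℝ) < (k:ℝ) := by exact_mod_cast hk
    rcases eq_or_lt_of_le (hS (ν₀ + k)) with h0 | h0
    · rw [← h0]
      have := Real.rpow_pos_of_pos hμ0 q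
      have := Real.rpow_pos_of_pos hk0 q
      positivity
    · have h1 := hind k h0
      have hS0p : 0 < S ν₀ ^ p := Real.rpow_pos_of_pos hS0 _
      have h2 : μ * k ≤ S (ν₀ + k) ^ p := by nlinarith
      have h3 : 0 < μ * k := by positivity
      have h4 := Real.rpow_le_rpow_of_nonpos h3 h2 hq0.le
      rw [← Real.rpow_mul (hS _), hpq, Real.rpow_one, Real.mul_rpow hμ0.le hk0.le] at h4
      exact h4
  -- conclude
  have hν₀1 : (0:ℝ) < (ν₀:ℝ) + 1 := by positivity
  set C₁ : ℝ := μ ^ q * ((ν₀:ℝ) + 1) ^ (-q) with hC₁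
  set C₂ : ℝ := (S ν₀ + 1) * ((ν₀:ℝ) + 1) ^ (-q) with hC₂
  have hC₁0 : 0 < C₁ := mul_pos (Real.rpow_pos_of_pos hμ0 _) (Real.rpow_pos_of_pos hν₀1 _)
  have hC₂0 : 0 < C₂ := mul_pos (by linarith [hS ν₀]) (Real.rpow_pos_of_pos hν₀1 _)
  refine ⟨C₁ + C₂, by linarith, ?_⟩
  intro ν hν
  have hν1 : 1 ≤ ν := le_trans (le_max_right _ _) hν
  have hν0 : ν₀ ≤ ν := le_trans (le_max_left _ _) hν
  have hνR : (0:ℝ) < (ν:ℝ) := by exact_mod_cast hν1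
  have hνq : 0 < (ν:ℝ) ^ q := Real.rpow_pos_of_pos hνR _
  rcases eq_or_lt_of_le hν0 with heq | hlt
  · -- ν = ν₀
    have hSν : S ν ≤ S ν₀ := hmono' ν hν0
    have hν₀q : 0 < ((ν₀:ℝ) + 1) ^ (-q) := Real.rpow_pos_of_pos hν₀1 _
    have h2 : (ν:ℝ) ^ (-q) ≤ ((ν₀:ℝ) + 1) ^ (-q) := by
      apply Real.rpow_le_rpow hνR.le _ (by linarith)
      have hle : (ν:ℝ) ≤ (ν₀:ℝ) := by exact_mod_cast heq.ge
      linarith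
    have h3 : (ν:ℝ) ^ (-q) * (ν:ℝ) ^ q = 1 := by
      rw [← Real.rpow_add hνR]; simp
    have h1 : (1:ℝ) ≤ ((ν₀:ℝ) + 1) ^ (-q) * (ν:ℝ) ^ q := by
      have := mul_le_mul_of_nonneg_right h2 hνq.le
      linarith
    have h4 : S ν₀ + 1 ≤ (S ν₀ + 1) * (((ν₀:ℝ) + 1) ^ (-q) * (ν:ℝ) ^ q) := by
      have hpos : (0:ℝ) ≤ S ν₀ + 1 := by linarith [hS ν₀]
      have := mul_le_mul_of_nonneg_left h1 hpos
      linarith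
    calc S ν ≤ S ν₀ + 1 := by linarith
      _ ≤ (S ν₀ + 1) * (((ν₀:ℝ) + 1) ^ (-q) * (ν:ℝ) ^ q) := h4
      _ = C₂ * (ν:ℝ) ^ q := by rw [hC₂]; ring
      _ ≤ (C₁ + C₂) * (ν:ℝ) ^ q := by linarith [mul_pos hC₁0 hνq]
  · -- ν₀ < ν
    set k := ν - ν₀ with hkdef
    have hk1 : 1 ≤ k := by omega
    have hνk : ν = ν₀ + k := by omega
    have h1 := hbound k hk1
    have hkR : (0:ℝ) < (k:ℝ) := by exact_mod_cast hk1
    have hle : (ν:ℝ) / ((ν₀:ℝ) + 1) ≤ (k:ℝ) := by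
      rw [div_le_iff₀ hν₀1]
      have hnat : ν ≤ (ν₀ + 1) * k := by
        have ha : ν₀ ≤ ν₀ * k := Nat.le_mul_of_pos_right _ hk1
        have hb : (ν₀ + 1) * k = ν₀ * k + k := by ring
        omega
      calc (ν:ℝ) ≤ ((ν₀:ℝ) + 1) * (k:ℝ) := by exact_mod_cast hnat
        _ = (k:ℝ) * ((ν₀:ℝ) + 1) := by ring
    have h2 : (k:ℝ) ^ q ≤ ((ν:ℝ) / ((ν₀:ℝ) + 1)) ^ q :=
      Real.rpow_le_rpow_of_nonpos (by positivity) hle hq0.le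
    have h3 : ((ν:ℝ) / ((ν₀:ℝ) + 1)) ^ q = (ν:ℝ) ^ q * ((ν₀:ℝ) + 1) ^ (-q) := by
      rw [Real.div_rpow hνR.le hν₀1.le, Real.rpow_neg hν₀1.le, div_eq_mul_inv]
    have hμq : 0 < μ ^ q := Real.rpow_pos_of_pos hμ0 _
    calc S ν = S (ν₀ + k) := by rw [hνk]
      _ ≤ μ ^ q * (k:ℝ) ^ q := h1
      _ ≤ μ ^ q * ((ν:ℝ) ^ q * ((ν₀:ℝ) + 1) ^ (-q)) := by
          rw [← h3]; exact mul_le_mul_of_nonneg_left h2 hμq.le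
      _ = C₁ * (ν:ℝ) ^ q := by rw [hC₁]; ring
      _ ≤ (C₁ + C₂) * (ν:ℝ) ^ q := by linarith [mul_pos hC₂0 hνq]
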